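/- For every δ > 0, the real 2n×2n block matrix A(δ) := [[−ΦᵀDΦ, γΦᵀDPΦ], [δI, −δI]] is Hurwitz, i.e., every (complex) eigenvalue of A(δ) has strictly negative real part. -/

import Mathlib

open Matrix BigOperators

lemma key_quad (γ δ m br bi a t : ℝ) (hγ0 : 0 < γ) (hγ1 : γ < 1) (hδ : 0 < δ)
    (hm : 0 < m) (hb : br^2 + bi^2 ≤ γ^2*m^2) (ha : 0 ≤ a)
    (e1 : a^2 - t^2 + (δ+m)*a + δ*m - δ*br = 0)
    (e2 : t*(2*a+δ+m) = δ*bi) : False := by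
  have hgm : 0 < γ*m := mul_pos hγ0 hm
  have hbr : br ≤ γ*m := by nlinarith [sq_nonneg bi, sq_nonneg (br - γ*m)]
  have hmb : 0 < m - br := by nlinarith
  have h1 : δ*(m - br) ≤ t^2 := by
    nlinarith [mul_nonneg ha (le_of_lt (add_pos hδ hm)), sq_nonneg a]
  have h2 : δ^2*bi^2 = t^2*(2*a+δ+m)^2 := by
    rw [show δ^2*bi^2 = (δ*bi)^2 by ring, ← e2]; ring
  have h3 : (δ+m)^2 ≤ (2*a+δ+m)^2 := by
    nlinarith [sq_nonneg a, mul_nonneg ha (le_of_lt (add_pos hδ hm))]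
  have h4 : δ*(m-br)*(δ+m)^2 ≤ t^2*(2*a+δ+m)^2 :=
    le_trans (mul_le_mul_of_nonneg_right h1 (sq_nonneg (δ+m)))
      (mul_le_mul_of_nonneg_left h3 (sq_nonneg t))
  have h5 : δ^2*(4*m*(m-br)) ≤ δ*(m-br)*(δ+m)^2 := by
    nlinarith [mul_nonneg (mul_pos hδ hmb).le (sq_nonneg (δ-m))]
  have h7 : γ*m < 2*m - br := by nlinarith
  have hg0 : 0 < (2*m - br - γ*m)*(2*m - br + γ*m) := mul_pos (by linarith) (by linarith)
  have hkey : γ^2*m^2 - br^2 < 4*m*(m-br) := by nlinarith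
  have hbi : bi^2 ≤ γ^2*m^2 - br^2 := by linarith
  have h6 : δ^2*bi^2 < δ^2*(4*m*(m-br)) :=
    mul_lt_mul_of_pos_left (lt_of_le_of_lt hbi hkey) (by positivity)
  linarith

lemma inj_of_rank {N n : ℕ} (Φ : Matrix (Fin N) (Fin n) ℝ) (hΦ : Φ.rank = n) :
    ∀ x : Fin n → ℝ, Φ.mulVec x = 0 → x = 0 := by
  intro x hx
  have h := Φ.mulVecLin.finrank_range_add_finrank_ker
  rw [show Matrix.rank Φ = Module.finrank ℝ (LinearMap.range Φ.mulVecLin) from rfl] at hΦ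
  simp [Module.finrank_pi] at h
  have hker : Module.finrank ℝ (LinearMap.ker Φ.mulVecLin) = 0 := by omega
  have hbot : LinearMap.ker Φ.mulVecLin = ⊥ := Submodule.finrank_eq_zero.mp hker
  have hxin : x ∈ LinearMap.ker Φ.mulVecLin := by
    simpa [Matrix.mulVecLin_apply] using hx
  rw [hbot] at hxin
  simpa using hxin

lemma injC_of_rank {N n : ℕ} (Φ : Matrix (Fin N) (Fin n) ℝ) (hΦ : Φ.rank = n)
    (x : Fin n → ℂ) (hx : (Φ.map (fun r : ℝ => (r:ℂ))).mulVec x = 0) : x = 0 := by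
  have hre : Φ.mulVec (fun j => (x j).re) = 0 := by
    funext s
    have h := congrFun hx s
    simp [Matrix.mulVec, dotProduct, Matrix.map_apply] at h ⊢
    have h2 := congrArg Complex.re h
    simpa [Complex.ext_iff] using h2
  have him : Φ.mulVec (fun j => (x j).im) = 0 := by
    funext s
    have h := congrFun hx s
    simp [Matrix.mulVec, dotProduct, Matrix.map_apply] at h ⊢
    have h2 := congrArg Complex.im h
    simpa [Complex.ext_iff] using h2
  have h1 := inj_of_rank Φ hΦ _ hre
  have h2 := inj_of_rank Φ hΦ _ him
  funext j
  have e1 := congrFun h1 j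
  have e2 := congrFun h2 j
  simp at e1 e2
  exact Complex.ext e1 e2

lemma abs_b0_le {N : ℕ} (P : Matrix (Fin N) (Fin N) ℝ) (d : Fin N → ℝ)
    (hP : ∀ i j, 0 ≤ P i j) (hrow : ∀ i, ∑ j, P i j = 1) (hd : ∀ s, 0 ≤ d s)
    (hstat : Matrix.vecMul d P = d) (z : Fin N → ℂ) :
    norm (∑ s, (d s : ℂ) * ((starRingEnd ℂ) (z s) * ((P.map (fun r : ℝ => (r:ℂ))).mulVec z) s))
      ≤ ∑ s, d s * Complex.normSq (z s) := by
  set Pz : Fin N → ℂ := (P.map (fun r : ℝ => (r:ℂ))).mulVec z with hPz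
  have step0 : norm (∑ s, (d s : ℂ) * ((starRingEnd ℂ) (z s) * Pz s))
      ≤ ∑ s, d s * (norm (z s) * norm (Pz s)) := by
    refine le_trans (norm_sum_le _ _) (le_of_eq ?_)
    refine Finset.sum_congr rfl fun s _ => ?_
    simp [_root_.map_mul, Complex.norm_real, Real.norm_eq_abs, abs_of_nonneg (hd s), mul_assoc]
  have step1 : ∀ s, (norm (Pz s))^2 ≤ ∑ j, P s j * Complex.normSq (z j) := by
    intro s
    have tri : norm (Pz s) ≤ ∑ j, P s j * norm (z j) := by
      rw [hPz]
      simp only [Matrix.mulVec, dotProduct]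
      refine le_trans (norm_sum_le _ _) (le_of_eq ?_)
      refine Finset.sum_congr rfl fun j _ => ?_
      simp [Matrix.mulVec, dotProduct, _root_.map_mul, Matrix.map_apply, abs_of_nonneg (hP s j)]
    have cs : (∑ j, P s j * norm (z j))^2
        ≤ (∑ j, P s j) * ∑ j, P s j * Complex.normSq (z j) := by
      refine Finset.sum_sq_le_sum_mul_sum_of_sq_eq_mul _ (fun j _ => hP s j)
        (fun j _ => mul_nonneg (hP s j) (Complex.normSq_nonneg _)) (fun j _ => ?_)
      rw [Complex.normSq_eq_norm_sq]; ring
    rw [hrow s, one_mul] at cs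
    calc (norm (Pz s))^2 ≤ (∑ j, P s j * norm (z j))^2 := by
          apply pow_le_pow_left₀ (norm_nonneg _) tri
      _ ≤ _ := cs
  have step2 : ∑ s, d s * (norm (Pz s))^2 ≤ ∑ s, d s * Complex.normSq (z s) := by
    calc ∑ s, d s * (norm (Pz s))^2
        ≤ ∑ s, d s * ∑ j, P s j * Complex.normSq (z j) :=
          Finset.sum_le_sum fun s _ => mul_le_mul_of_nonneg_left (step1 s) (hd s)
      _ = ∑ j, (∑ s, d s * P s j) * Complex.normSq (z j) := by
          simp_rw [Finset.mul_sum, Finset.sum_mul]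
          rw [Finset.sum_comm]
          exact Finset.sum_congr rfl fun j _ => Finset.sum_congr rfl fun s _ => by ring
      _ = ∑ s, d s * Complex.normSq (z s) := by
          refine Finset.sum_congr rfl fun j _ => ?_
          have h := congrFun hstat j
          simp [Matrix.vecMul, dotProduct] at h
          rw [h]
  have S_nonneg : 0 ≤ ∑ s, d s * Complex.normSq (z s) :=
    Finset.sum_nonneg fun s _ => mul_nonneg (hd s) (Complex.normSq_nonneg _)
  have cs2 : (∑ s, d s * (norm (z s) * norm (Pz s)))^2
      ≤ (∑ s, d s * Complex.normSq (z s)) * ∑ s, d s * (norm (Pz s))^2 := by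
    refine Finset.sum_sq_le_sum_mul_sum_of_sq_eq_mul _
      (fun s _ => mul_nonneg (hd s) (Complex.normSq_nonneg _))
      (fun s _ => mul_nonneg (hd s) (sq_nonneg _)) (fun s _ => ?_)
    rw [Complex.normSq_eq_norm_sq]; ring
  have sum_nonneg' : 0 ≤ ∑ s, d s * (norm (z s) * norm (Pz s)) :=
    Finset.sum_nonneg fun s _ => mul_nonneg (hd s)
      (mul_nonneg (norm_nonneg _) (norm_nonneg _))
  have final : ∑ s, d s * (norm (z s) * norm (Pz s))
      ≤ ∑ s, d s * Complex.normSq (z s) := by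
    nlinarith [mul_le_mul_of_nonneg_left step2 S_nonneg]
  exact le_trans step0 final

lemma star_mulVec_real {N n : ℕ} (Φ : Matrix (Fin N) (Fin n) ℝ) (x : Fin n → ℂ) :
    (Φ.map (fun r : ℝ => (r:ℂ))).mulVec (star x) = star ((Φ.map (fun r : ℝ => (r:ℂ))).mulVec x) := by
  funext s
  simp only [Matrix.mulVec, dotProduct, Pi.star_apply, Matrix.map_apply]
  rw [show star (∑ j, (Φ s j : ℂ) * x j) = (starRingEnd ℂ) (∑ j, (Φ s j : ℂ) * x j) from rfl,
    map_sum]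
  refine Finset.sum_congr rfl fun j _ => ?_
  simp [Complex.conj_ofReal]

lemma dot_transform {N n : ℕ} (Φ : Matrix (Fin N) (Fin n) ℝ) (Q : Matrix (Fin N) (Fin N) ℝ)
    (x : Fin n → ℂ) :
    dotProduct (star x) (((Φᵀ * Q * Φ).map (fun r : ℝ => (r:ℂ))).mulVec x)
      = dotProduct (star ((Φ.map (fun r : ℝ => (r:ℂ))).mulVec x))
        ((Q.map (fun r : ℝ => (r:ℂ))).mulVec ((Φ.map (fun r : ℝ => (r:ℂ))).mulVec x)) := by
  have hmap : ((Φᵀ * Q * Φ).map (fun r : ℝ => (r:ℂ)))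
      = (Φ.map (fun r : ℝ => (r:ℂ)))ᵀ * Q.map (fun r : ℝ => (r:ℂ)) * Φ.map (fun r : ℝ => (r:ℂ)) := by
    rw [show (fun r : ℝ => (r:ℂ)) = ⇑Complex.ofRealHom from rfl]
    rw [Matrix.map_mul, Matrix.map_mul, Matrix.transpose_map]
  rw [hmap, ← Matrix.mulVec_mulVec, ← Matrix.mulVec_mulVec, Matrix.dotProduct_mulVec,
    Matrix.vecMul_transpose, star_mulVec_real]

/-- For every `δ > 0`, the real `2n×2n` block matrix
`A(δ) := [[−ΦᵀDΦ, γΦᵀDPΦ], [δI, −δI]]` (the system matrix of the ODE associated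
with the averaging TD algorithm) is Hurwitz: every complex eigenvalue of `A(δ)`
has strictly negative real part. -/
theorem averaging_TD_ODE_matrix_is_Hurwitz
    (N n : ℕ) (hN : 0 < N) (hn : 0 < n) (hnN : n ≤ N)
    (P : Matrix (Fin N) (Fin N) ℝ) (d : Fin N → ℝ) (γ : ℝ)
    (Φ : Matrix (Fin N) (Fin n) ℝ)
    (hPnonneg : ∀ i j, 0 ≤ P i j)
    (hProw : ∀ i, ∑ j, P i j = 1)
    (hdpos : ∀ s, 0 < d s)
    (hdsum : ∑ s, d s = 1)
    (hstat : Matrix.vecMul d P = d)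
    (hγ0 : 0 < γ) (hγ1 : γ < 1)
    (hΦ : Φ.rank = n)
    (δ : ℝ) (hδ : 0 < δ) :
    let D : Matrix (Fin N) (Fin N) ℝ := Matrix.diagonal d
    let A : Matrix (Fin n ⊕ Fin n) (Fin n ⊕ Fin n) ℝ :=
      Matrix.fromBlocks (-(Φᵀ * D * Φ)) (γ • (Φᵀ * D * P * Φ))
        (δ • (1 : Matrix (Fin n) (Fin n) ℝ)) (-(δ • (1 : Matrix (Fin n) (Fin n) ℝ)))
    ∀ (μ : ℂ) (v : (Fin n ⊕ Fin n) → ℂ), v ≠ 0 →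
      (A.map (fun x : ℝ => (x : ℂ))).mulVec v = μ • v → μ.re < 0 := by
  intro D A μ v hv hmul
  by_contra hcon
  push_neg at hcon
  set Mc := ((Φᵀ * D * Φ)).map (fun r : ℝ => (r:ℂ)) with hMc
  set Bc := ((Φᵀ * D * P * Φ)).map (fun r : ℝ => (r:ℂ)) with hBc
  set x : Fin n → ℂ := fun j => v (Sum.inl j) with hxdef
  set y : Fin n → ℂ := fun j => v (Sum.inr j) with hydef
  have hveq : v = Sum.elim x y := by funext i; cases i <;> rfl
  have hA : A.map (fun r : ℝ => (r:ℂ))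
      = Matrix.fromBlocks (-Mc) ((γ:ℂ) • Bc) ((δ:ℂ) • 1) (-((δ:ℂ) • 1)) := by
    show (Matrix.fromBlocks (-(Φᵀ * D * Φ)) (γ • (Φᵀ * D * P * Φ))
        (δ • (1 : Matrix (Fin n) (Fin n) ℝ)) (-(δ • (1 : Matrix (Fin n) (Fin n) ℝ)))).map
        (fun r : ℝ => (r:ℂ)) = _
    ext i j
    cases i <;> cases j <;>
      · simp [Matrix.map_apply, Matrix.one_apply, Mc, Bc, apply_ite (fun r : ℝ => (r:ℂ))]
  rw [hA, hveq, Matrix.fromBlocks_mulVec] at hmul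
  have E1 : (-Mc).mulVec x + ((γ:ℂ) • Bc).mulVec y = μ • x := by
    funext j; have h := congrFun hmul (Sum.inl j); simpa using h
  have E2 : ∀ j, (δ:ℂ) * x j - (δ:ℂ) * y j = μ * y j := by
    intro j
    have h := congrFun hmul (Sum.inr j)
    simp [Matrix.smul_mulVec, Matrix.one_mulVec, Matrix.neg_mulVec,
      sub_eq_add_neg] at h
    linear_combination h
  by_cases hx0 : x = 0
  · have hy0 : y ≠ 0 := by
      intro hy
      apply hv
      rw [hveq, hx0, hy]
      funext i; cases i <;> simp
    obtain ⟨j, hj⟩ := Function.ne_iff.mp hy0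
    have h0 := E2 j
    rw [show x j = 0 from congrFun hx0 j] at h0
    have h' : (μ + (δ:ℂ)) * y j = 0 := by linear_combination -h0
    rcases mul_eq_zero.mp h' with h | h
    · have : μ = -(δ:ℂ) := eq_neg_of_add_eq_zero_left h
      rw [this] at hcon
      simp at hcon
      linarith
    · exact hj h
  by_cases hμδ : μ + (δ:ℂ) = 0
  · have : μ = -(δ:ℂ) := eq_neg_of_add_eq_zero_left hμδ
    rw [this] at hcon
    simp at hcon
    linarith
  have hy : (μ + (δ:ℂ)) • y = (δ:ℂ) • x := by
    funext j
    simp only [Pi.smul_apply, smul_eq_mul]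
    linear_combination -(E2 j)
  set Φc := Φ.map (fun r : ℝ => (r:ℂ)) with hΦc
  set z := Φc.mulVec x with hz
  have hzne : z ≠ 0 := by
    intro h
    exact hx0 (injC_of_rank Φ hΦ x h)
  set S : ℂ := dotProduct (star x) (Mc.mulVec x) with hS
  set b0 : ℂ := dotProduct (star x) (Bc.mulVec x) with hb0
  set t1 : ℂ := dotProduct (star x) (Bc.mulVec y) with ht1
  set C : ℂ := dotProduct (star x) x with hC
  have eqA : -S + (γ:ℂ) * t1 = μ * C := by
    have h := congrArg (fun w => dotProduct (star x) w) E1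
    simpa [dotProduct_add, Matrix.neg_mulVec, dotProduct_neg,
      Matrix.smul_mulVec, dotProduct_smul, smul_eq_mul] using h
  have eqB : (μ + (δ:ℂ)) * t1 = (δ:ℂ) * b0 := by
    calc (μ + (δ:ℂ)) * t1 = dotProduct (star x) (Bc.mulVec ((μ + (δ:ℂ)) • y)) := by
          simp [Matrix.mulVec_smul, dotProduct_smul, smul_eq_mul, ht1]
      _ = dotProduct (star x) (Bc.mulVec ((δ:ℂ) • x)) := by rw [hy]
      _ = (δ:ℂ) * b0 := by simp [Matrix.mulVec_smul, dotProduct_smul, smul_eq_mul, hb0]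
  have Emain : μ*(μ+(δ:ℂ))*C + (μ+(δ:ℂ))*S - (γ:ℂ)*(δ:ℂ)*b0 = 0 := by
    linear_combination (-(μ+(δ:ℂ))) * eqA + (γ:ℂ) * eqB
  -- values of S, b0, C
  have hSval : S = ((∑ s, d s * Complex.normSq (z s) : ℝ) : ℂ) := by
    rw [hS, hMc, show D = Matrix.diagonal d from rfl, dot_transform]
    rw [show (Matrix.diagonal d).map (fun r : ℝ => (r:ℂ))
        = Matrix.diagonal (fun s => (d s : ℂ)) from Matrix.diagonal_map (by simp)]
    push_cast
    rw [dotProduct]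
    refine Finset.sum_congr rfl fun s _ => ?_
    rw [Matrix.mulVec_diagonal]
    simp only [Pi.star_apply, ← hz]
    calc star (z s) * ((d s : ℂ) * z s)
        = (d s : ℂ) * ((starRingEnd ℂ) (z s) * z s) := by rw [Complex.star_def]; ring
      _ = (d s : ℂ) * ((Complex.normSq (z s) : ℝ) : ℂ) := by
          rw [← Complex.normSq_eq_conj_mul_self]
  have hb0val : b0 = ∑ s, (d s : ℂ)
      * ((starRingEnd ℂ) (z s) * ((P.map (fun r : ℝ => (r:ℂ))).mulVec z) s) := by
    rw [hb0, hBc, show D = Matrix.diagonal d from rfl]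
    rw [show Φᵀ * Matrix.diagonal d * P * Φ = Φᵀ * (Matrix.diagonal d * P) * Φ from by
      rw [Matrix.mul_assoc Φᵀ (Matrix.diagonal d) P]]
    rw [dot_transform]
    rw [show ((Matrix.diagonal d * P).map (fun r : ℝ => (r:ℂ)))
        = (Matrix.diagonal d).map (fun r : ℝ => (r:ℂ)) * P.map (fun r : ℝ => (r:ℂ)) from by
          rw [show (fun r : ℝ => (r:ℂ)) = ⇑Complex.ofRealHom from rfl, Matrix.map_mul]]
    rw [show (Matrix.diagonal d).map (fun r : ℝ => (r:ℂ))
        = Matrix.diagonal (fun s => (d s : ℂ)) from Matrix.diagonal_map (by simp)]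
    rw [← Matrix.mulVec_mulVec]
    rw [dotProduct]
    refine Finset.sum_congr rfl fun s _ => ?_
    rw [Matrix.mulVec_diagonal]
    simp only [Pi.star_apply, ← hz]
    rw [Complex.star_def]; ring
  have hCval : C = ((∑ j, Complex.normSq (x j) : ℝ) : ℂ) := by
    rw [hC, dotProduct]
    push_cast
    refine Finset.sum_congr rfl fun j _ => ?_
    simp only [Pi.star_apply]
    rw [Complex.star_def, ← Complex.normSq_eq_conj_mul_self]
  set Sr := ∑ s, d s * Complex.normSq (z s) with hSr_def
  set Cr := ∑ j, Complex.normSq (x j) with hCr_def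
  obtain ⟨s0, hs0⟩ := Function.ne_iff.mp hzne
  have hSr : 0 < Sr := Finset.sum_pos'
    (fun s _ => mul_nonneg (hdpos s).le (Complex.normSq_nonneg _))
    ⟨s0, Finset.mem_univ _, mul_pos (hdpos s0) (by
      simpa [Complex.normSq_pos] using hs0)⟩
  obtain ⟨j0, hj0⟩ := Function.ne_iff.mp hx0
  have hCr : 0 < Cr := Finset.sum_pos'
    (fun j _ => Complex.normSq_nonneg _)
    ⟨j0, Finset.mem_univ _, by simpa [Complex.normSq_pos] using hj0⟩
  have h1 : norm b0 ≤ Sr := by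
    rw [hb0val]
    exact abs_b0_le P d hPnonneg hProw (fun s => (hdpos s).le) hstat z
  have habs : b0.re^2 + b0.im^2 ≤ Sr^2 := by
    have h2 : (norm b0)^2 ≤ Sr^2 := pow_le_pow_left₀ (norm_nonneg _) h1 2
    calc b0.re^2 + b0.im^2 = (norm b0)^2 := by
          rw [Complex.sq_norm, Complex.normSq_apply]; ring
      _ ≤ Sr^2 := h2
  rw [hSval, hCval] at Emain
  set a := μ.re with ha_def
  set t := μ.im with ht_def
  set Br := b0.re with hBr_def
  set Bi := b0.im with hBi_def
  have hre := congrArg Complex.re Emain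
  have him := congrArg Complex.im Emain
  simp only [Complex.add_re, Complex.sub_re, Complex.mul_re, Complex.mul_im,
    Complex.add_im, Complex.sub_im, Complex.ofReal_re, Complex.ofReal_im,
    Complex.zero_re, Complex.zero_im] at hre him
  have R1 : (a*a - t*t + δ*a)*Cr + (a+δ)*Sr - γ*δ*Br = 0 := by linear_combination hre
  have R2 : (2*a*t + δ*t)*Cr + t*Sr - γ*δ*Bi = 0 := by linear_combination him
  have hCrne : Cr ≠ 0 := ne_of_gt hCr
  refine key_quad γ δ (Sr/Cr) (γ*Br/Cr) (γ*Bi/Cr) a t hγ0 hγ1 hδ (div_pos hSr hCr) ?_ hcon ?_ ?_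
  · have h2 : γ^2*(Br^2+Bi^2) ≤ γ^2*Sr^2 :=
      mul_le_mul_of_nonneg_left habs (sq_nonneg γ)
    rw [show (γ*Br/Cr)^2 + (γ*Bi/Cr)^2 = (γ^2*(Br^2+Bi^2))/Cr^2 from by ring,
      show γ^2*(Sr/Cr)^2 = (γ^2*Sr^2)/Cr^2 from by ring]
    exact div_le_div_of_nonneg_right h2 (by positivity)
  · field_simp
    linear_combination R1
  · field_simp
    linear_combination R2
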